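/- The true source is the unique image source closest to any point inside the room: for every m ∈ ℝ³ with 0 < mᵢ < Lᵢ for all i, the point (d₁, d₂, d₃) belongs to S(d, L), and every other point r ∈ S(d, L) with r ≠ (d₁, d₂, d₃) satisfies ‖m − r‖ > ‖m − (d₁, d₂, d₃)‖ in Euclidean norm. -/

import Mathlib

/-- The full shoebox image-source set `S(d, L)`: points
`(ε₁d₁ + 2q₁L₁, ε₂d₂ + 2q₂L₂, ε₃d₃ + 2q₃L₃)` with `εᵢ ∈ {-1, 1}` and `qᵢ ∈ ℤ`. -/
noncomputable def imageSourceSet (L d : Fin 3 → ℝ) : Set (EuclideanSpace ℝ (Fin 3)) :=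
  {x | ∃ (ε : Fin 3 → ℝ) (q : Fin 3 → ℤ),
    (∀ i, ε i = 1 ∨ ε i = -1) ∧
    (∀ i, x i = ε i * d i + 2 * (q i : ℝ) * L i)}

/-- The true source position `(d₁, d₂, d₃)` as a point of `ℝ³`. -/
noncomputable def srcPt (d : Fin 3 → ℝ) : EuclideanSpace ℝ (Fin 3) := WithLp.toLp 2 (fun i => d i)

/-- Coordinate-wise key inequality. -/
lemma coord_key (L d m x : ℝ) (hL : 0 < L) (hd0 : 0 < d) (hdL : d < L)
    (hm0 : 0 < m) (hmL : m < L) (ε : ℝ) (q : ℤ) (hε : ε = 1 ∨ ε = -1)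
    (hx : x = ε * d + 2 * (q : ℝ) * L) :
    (m - d)^2 ≤ (m - x)^2 ∧ (x ≠ d → (m - d)^2 < (m - x)^2) := by
  have hstrict : x ≠ d → (m - d)^2 < (m - x)^2 := by
    intro hne
    rcases hε with h1 | h1 <;> subst h1
    · have hq : q ≠ 0 := by
        rintro rfl; simp at hx; exact hne (by linarith)
      rcases lt_or_gt_of_ne hq with h | h
      · have hq1 : (q : ℝ) ≤ -1 := by exact_mod_cast Int.le_sub_one_of_lt h
        have ht : L ≤ -(q : ℝ) * L := by nlinarith
        nlinarith [mul_pos (show (0:ℝ) < -(q:ℝ)*L by linarith)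
          (show (0:ℝ) < -(q:ℝ)*L - d + m by linarith)]
      · have hq1 : (1 : ℝ) ≤ (q : ℝ) := by exact_mod_cast h
        have ht : L ≤ (q : ℝ) * L := by nlinarith
        nlinarith [mul_pos (show (0:ℝ) < (q:ℝ)*L by linarith)
          (show (0:ℝ) < (q:ℝ)*L + d - m by linarith)]
    · rcases le_or_gt q 0 with h | h
      · have hq1 : (q : ℝ) ≤ 0 := by exact_mod_cast h
        have ht : (q:ℝ) * L ≤ 0 := mul_nonpos_of_nonpos_of_nonneg hq1 hL.le
        nlinarith [mul_pos (show (0:ℝ) < d - (q:ℝ)*L by linarith)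
          (show (0:ℝ) < m - (q:ℝ)*L by linarith)]
      · have hq1 : (1 : ℝ) ≤ (q : ℝ) := by exact_mod_cast h
        have ht : L ≤ (q : ℝ) * L := by nlinarith
        nlinarith [mul_pos_of_neg_of_neg (show d - (q:ℝ)*L < 0 by linarith)
          (show m - (q:ℝ)*L < 0 by linarith)]
  refine ⟨?_, hstrict⟩
  by_cases hxd : x = d
  · rw [hxd]
  · exact (hstrict hxd).le

/-- The true source `(d₁, d₂, d₃)` is the unique image source closest to any point strictly
inside the room (in Euclidean norm). -/
theorem true_source_is_closest (L d : Fin 3 → ℝ)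
    (hL : ∀ i, 0 < L i) (hd : ∀ i, 0 < d i ∧ d i < L i)
    (m : EuclideanSpace ℝ (Fin 3)) (hm : ∀ i, 0 < m i ∧ m i < L i) :
    srcPt d ∈ imageSourceSet L d ∧
    ∀ r ∈ imageSourceSet L d, r ≠ srcPt d → ‖m - srcPt d‖ < ‖m - r‖ := by
  constructor
  · exact ⟨fun _ => 1, fun _ => 0, fun i => Or.inl rfl, fun i => by simp [srcPt]⟩
  · rintro r ⟨ε, q, hε, hr⟩ hne
    have key : ∀ i, (m i - d i)^2 ≤ (m i - r i)^2 ∧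
        (r i ≠ d i → (m i - d i)^2 < (m i - r i)^2) := fun i =>
      coord_key (L i) (d i) (m i) (r i) (hL i) (hd i).1 (hd i).2 (hm i).1 (hm i).2
        (ε i) (q i) (hε i) (hr i)
    obtain ⟨i0, hi0⟩ : ∃ i, r i ≠ d i := by
      by_contra h
      push_neg at h
      exact hne (by ext i; simpa [srcPt] using h i)
    have hsum : ∑ i, (m i - d i)^2 < ∑ i, (m i - r i)^2 :=
      Finset.sum_lt_sum (fun i _ => (key i).1) ⟨i0, Finset.mem_univ i0, (key i0).2 hi0⟩
    rw [EuclideanSpace.norm_eq, EuclideanSpace.norm_eq]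
    apply Real.sqrt_lt_sqrt (by positivity)
    simpa [srcPt, sq_abs] using hsum
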